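/- In the hard instance (A, f, c, v_T) with A = {⊥, g, x, 1, ..., k}, f(⊥)=0, f(g)=1, f(x)=3/10, f(i)=1/5 for i ∈ [k], c(⊥)=0, c(g)=1/10, c(x)=c(i)=1/100, the inspection scheme (g, α = 1/10, p) with p(S ∪ {x}) = 1/(2|T|) for each S ∈ cyclic(T), p({x}) = 2/3 − k/(2|T|), p(∅) = 1/3, is incentive-compatible: the agent's utility from every action is exactly 0. Its principal's utility equals 53/60 − 1/(160·|T|). -/

import Mathlib

/-- The action set of the hard instance: `⊥`, `g`, `x`, and `k` actions `1,…,k`. -/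
inductive HardAction (k : ℕ) where
  | bot | g | x
  | act (i : Fin k)
deriving DecidableEq, Fintype

/-- All cyclic shifts of a subset `T` of `ℤ/k` (identified with `Fin k`). -/
def cyclicShifts {k : ℕ} (T : Finset (Fin k)) : Finset (Finset (Fin k)) :=
  Finset.univ.image (fun t : Fin k => T.image (fun j => j + t))

/-- The part of `S` coming from the `k` actions `1,…,k`, i.e. `S \ {⊥, g, x}`. -/
def kPart {k : ℕ} (S : Finset (HardAction k)) : Finset (Fin k) :=
  Finset.univ.filter (fun i => HardAction.act i ∈ S)

/-- The inspection cost function `v_T` of the hard instance. -/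
noncomputable def vT {k : ℕ} (T : Finset (Fin k)) (S : Finset (HardAction k)) : ℝ :=
  (if (S \ {HardAction.bot, HardAction.g}).Nonempty then 1/40 else 0)
  + (if HardAction.bot ∈ S then 1 else 0) + (if HardAction.g ∈ S then 1 else 0)
  + (1 / (80 * (k : ℝ))) *
    (if kPart S = ∅ then 0
     else if ((kPart S).card : ℝ) < 4 * (k : ℝ) / 5 ∨ kPart S ∈ cyclicShifts T then 1
     else 2)

/-- Success probabilities of the hard instance. -/
noncomputable def hf {k : ℕ} : HardAction k → ℝ
  | .bot => 0
  | .g => 1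
  | .x => 3/10
  | .act _ => 1/5

/-- Costs of the hard instance. -/
noncomputable def hc {k : ℕ} : HardAction k → ℝ
  | .bot => 0
  | .g => 1/10
  | .x => 1/100
  | .act _ => 1/100

open Finset

namespace Stmt18Aux

lemma act_inj {k : ℕ} : Function.Injective (HardAction.act (k := k)) := by
  intro a b h; cases h; rfl

lemma shift_inj {k : ℕ} (hk : k.Prime) {T : Finset (Fin k)} (hT0 : T.Nonempty)
    (hTlt : T.card < k) :
    Function.Injective (fun t : Fin k => T.image (fun j => j + t)) := by
  haveI : NeZero k := ⟨hk.pos.ne'⟩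
  intro s t h
  by_contra hst
  have hd0 : s - t ≠ 0 := sub_ne_zero.mpr hst
  set d := s - t with hd
  have hcl : ∀ j ∈ T, j + d ∈ T := by
    intro j hj
    have h1 : j + s ∈ T.image (fun j => j + t) := by
      have : j + s ∈ T.image (fun j => j + s) := mem_image_of_mem _ hj
      rwa [show T.image (fun j => j + s) = T.image (fun j => j + t) from h] at this
    obtain ⟨a, ha, hae⟩ := mem_image.mp h1
    have ha' : a = j + d := by
      rw [hd, ← add_sub_assoc, ← hae]; simp
    rwa [← ha']
  have hord : addOrderOf d = k := by
    have hdvd : addOrderOf d ∣ k := by simpa using addOrderOf_dvd_card (x := d)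
    rcases (Nat.Prime.eq_one_or_self_of_dvd hk _ hdvd) with h1 | h1
    · exact absurd (by rwa [AddMonoid.addOrderOf_eq_one_iff] at h1) hd0
    · exact h1
  obtain ⟨j0, hj0⟩ := hT0
  have hmem : ∀ n : ℕ, j0 + n • d ∈ T := by
    intro n
    induction n with
    | zero => simpa using hj0
    | succ m ih =>
      have := hcl _ ih
      rwa [add_assoc, ← succ_nsmul] at this
  have hinj : Function.Injective (fun n : Fin k => j0 + (n : ℕ) • d) := by
    intro a b hab
    have h2 : (a : ℕ) • d = (b : ℕ) • d := by
      exact add_left_cancel hab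
    have := nsmul_injOn_Iio_addOrderOf (x := d)
      (by rw [hord]; exact Set.mem_Iio.mpr a.isLt)
      (by rw [hord]; exact Set.mem_Iio.mpr b.isLt) h2
    exact Fin.ext this
  have hsub : Finset.univ.image (fun n : Fin k => j0 + (n : ℕ) • d) ⊆ T := by
    intro x hx
    obtain ⟨n, _, rfl⟩ := mem_image.mp hx
    exact hmem n
  have := card_le_card hsub
  rw [card_image_of_injective _ hinj, card_univ, Fintype.card_fin] at this
  omega

lemma mem_shift {k : ℕ} [NeZero k] (T : Finset (Fin k)) (t i : Fin k) :
    i ∈ T.image (fun j => j + t) ↔ i - t ∈ T := by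
  simp only [Finset.mem_image]
  constructor
  · rintro ⟨j, hj, rfl⟩; simpa using hj
  · intro h; exact ⟨i - t, h, by simp⟩

lemma card_cyclicShifts {k : ℕ} (hk : k.Prime) {T : Finset (Fin k)} (hT0 : T.Nonempty)
    (hTlt : T.card < k) : (cyclicShifts T).card = k := by
  rw [cyclicShifts, card_image_of_injective _ (shift_inj hk hT0 hTlt), card_univ,
    Fintype.card_fin]

lemma card_of_mem_shifts {k : ℕ} {T S : Finset (Fin k)} (hS : S ∈ cyclicShifts T) :
    S.card = T.card := by
  obtain ⟨t, _, rfl⟩ := mem_image.mp hS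
  exact card_image_of_injective _ (add_left_injective t)

lemma count_shifts {k : ℕ} (hk : k.Prime) {T : Finset (Fin k)} (hT0 : T.Nonempty)
    (hTlt : T.card < k) (i : Fin k) :
    ((cyclicShifts T).filter (fun S => i ∈ S)).card = T.card := by
  haveI : NeZero k := ⟨hk.pos.ne'⟩
  rw [cyclicShifts, Finset.filter_image,
    card_image_of_injective _ (shift_inj hk hT0 hTlt)]
  have : (Finset.univ.filter (fun t : Fin k => i ∈ T.image (fun j => j + t)))
      = T.image (fun a => i - a) := by
    ext t
    simp only [mem_filter, mem_univ, true_and, mem_shift]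
    constructor
    · intro h; exact mem_image.mpr ⟨i - t, h, by simp⟩
    · intro h
      obtain ⟨a, ha, rfl⟩ := mem_image.mp h
      simpa [sub_sub_cancel] using ha
  rw [this, card_image_of_injective]
  intro a b hab
  exact sub_right_injective hab

end Stmt18Aux

namespace Stmt18Aux

variable {k : ℕ}

/-- abbreviation for the support sets -/
def ins (S : Finset (Fin k)) : Finset (HardAction k) :=
  insert HardAction.x (S.image HardAction.act)

lemma x_notmem_image (S : Finset (Fin k)) :
    HardAction.x ∉ S.image (HardAction.act) := by simp

lemma g_notmem_ins (S : Finset (Fin k)) : HardAction.g ∉ ins S := by simp [ins]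

lemma bot_notmem_ins (S : Finset (Fin k)) : HardAction.bot ∉ ins S := by simp [ins]

lemma ins_inj : Function.Injective (ins (k := k)) := by
  intro S1 S2 h
  have h2 : (ins S1).erase HardAction.x = (ins S2).erase HardAction.x := by rw [h]
  rw [ins, ins, Finset.erase_insert (x_notmem_image S1),
    Finset.erase_insert (x_notmem_image S2)] at h2
  exact Finset.image_injective act_inj h2

lemma kPart_ins (S : Finset (Fin k)) : kPart (ins S) = S := by
  ext i
  simp [kPart, ins, act_inj.eq_iff]

lemma kPart_empty : kPart (∅ : Finset (HardAction k)) = ∅ := by simp [kPart]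

lemma kPart_x : kPart ({HardAction.x} : Finset (HardAction k)) = ∅ := by simp [kPart]

lemma vT_empty (T : Finset (Fin k)) : vT T ∅ = 0 := by
  simp [vT, kPart_empty]

lemma vT_x (T : Finset (Fin k)) : vT T {HardAction.x} = 1/40 := by
  rw [vT, kPart_x]
  have h1 : (({HardAction.x} : Finset (HardAction k)) \ {HardAction.bot, HardAction.g}).Nonempty :=
    ⟨HardAction.x, by simp⟩
  simp [h1]

lemma vT_ins {T S : Finset (Fin k)} (hS : S ∈ cyclicShifts T) (hS0 : S.Nonempty) :
    vT T (ins S) = 1/40 + 1/(80 * (k : ℝ)) := by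
  rw [vT, kPart_ins]
  have h1 : ((ins S) \ {HardAction.bot, HardAction.g}).Nonempty :=
    ⟨HardAction.x, by simp [ins]⟩
  rw [if_pos h1, if_neg (bot_notmem_ins S), if_neg (g_notmem_ins S),
    if_neg hS0.ne_empty, if_pos (Or.inr hS)]
  ring

lemma ne_ins_of_x {S : Finset (Fin k)} (hS0 : S.Nonempty) :
    ({HardAction.x} : Finset (HardAction k)) ≠ ins S := by
  intro h
  obtain ⟨i, hi⟩ := hS0
  have : HardAction.act i ∈ ({HardAction.x} : Finset (HardAction k)) := by
    rw [h]; exact Finset.mem_insert_of_mem (Finset.mem_image_of_mem _ hi)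
  simp at this

lemma ne_ins_of_empty (S : Finset (Fin k)) : (∅ : Finset (HardAction k)) ≠ ins S := by
  intro h
  have : HardAction.x ∈ (∅ : Finset (HardAction k)) := by
    rw [h]; exact Finset.mem_insert_self _ _
  simp at this

end Stmt18Aux

open Stmt18Aux in
theorem stmt18 (k : ℕ) (hk : Nat.Prime k) (hk5 : 5 < k)
    (T : Finset (Fin k)) (hT : T.card = ⌈(4 * (k : ℚ) / 5)⌉₊)
    (p : Finset (HardAction k) → ℝ)
    (hpc : ∀ S ∈ cyclicShifts T,
      p (insert HardAction.x (S.image HardAction.act)) = 1 / (2 * (T.card : ℝ)))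
    (hpx : p {HardAction.x} = 2/3 - (k : ℝ) / (2 * (T.card : ℝ)))
    (hpe : p ∅ = 1/3)
    (hp0 : ∀ Q : Finset (HardAction k), Q ≠ ∅ → Q ≠ {HardAction.x} →
      (∀ S ∈ cyclicShifts T, Q ≠ insert HardAction.x (S.image HardAction.act)) →
      p Q = 0) :
    -- the scheme (g, 1/10, p) gives the agent utility exactly 0 from every action
    (∀ j : HardAction k,
      (if j = HardAction.g then (1/10 : ℝ) * hf j - hc j
       else (1/10 : ℝ) * hf j *
          (1 - ∑ Q ∈ Finset.univ.filter
            (fun Q : Finset (HardAction k) => HardAction.g ∈ Q ∨ j ∈ Q), p Q)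
        - hc j) = 0)
    -- and the principal's utility equals 53/60 - 1/(160·|T|)
    ∧ (1 - (1/10 : ℝ)) * hf (HardAction.g : HardAction k)
        - ∑ Q : Finset (HardAction k), p Q * vT T Q
      = 53/60 - 1 / (160 * (T.card : ℝ)) := by
  haveI : NeZero k := ⟨hk.pos.ne'⟩
  have hk0 : (0:ℚ) < (k:ℚ) := by exact_mod_cast hk.pos
  have hT0 : T.Nonempty := by
    rw [← Finset.card_pos, hT]
    exact Nat.ceil_pos.mpr (by positivity)
  have hTlt : T.card < k := by
    have h1 : (4 * (k:ℚ) / 5) ≤ ((k - 1 : ℕ) : ℚ) := by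
      have h6 : (6:ℚ) ≤ (k:ℚ) := by exact_mod_cast hk5
      rw [Nat.cast_sub (by omega)]
      push_cast
      linarith
    have h2 := Nat.ceil_le.mpr h1
    omega
  have hTc0 : ((T.card : ℝ)) ≠ 0 := Nat.cast_ne_zero.mpr hT0.card_pos.ne'
  have hkR0 : ((k:ℝ)) ≠ 0 := Nat.cast_ne_zero.mpr hk.pos.ne'
  have hcs : (cyclicShifts T).card = k := card_cyclicShifts hk hT0 hTlt
  have hSne : ∀ S ∈ cyclicShifts T, S.Nonempty := by
    intro S hS
    rw [← Finset.card_pos, card_of_mem_shifts hS]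
    exact hT0.card_pos
  have hpc' : ∀ S ∈ cyclicShifts T, p (ins S) = 1 / (2 * (T.card : ℝ)) := hpc
  have hp0' : ∀ Q : Finset (HardAction k), Q ≠ ∅ → Q ≠ {HardAction.x} →
      (∀ S ∈ cyclicShifts T, Q ≠ ins S) → p Q = 0 := hp0
  have hxnot : ({HardAction.x} : Finset (HardAction k)) ∉ (cyclicShifts T).image ins := by
    intro h
    obtain ⟨S, hS, hSe⟩ := Finset.mem_image.mp h
    exact ne_ins_of_x (hSne S hS) hSe.symm
  constructor
  · intro j
    cases j with
    | bot => simp [hf, hc]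
    | g => norm_num [hf, hc]
    | x =>
      have hxsub : insert {HardAction.x} ((cyclicShifts T).image ins) ⊆
          Finset.univ.filter
            (fun Q : Finset (HardAction k) => HardAction.g ∈ Q ∨ HardAction.x ∈ Q) := by
        intro Q hQ
        rw [Finset.mem_insert] at hQ
        rcases hQ with rfl | hQ
        · simp
        · obtain ⟨S, hS, rfl⟩ := Finset.mem_image.mp hQ
          simp only [Finset.mem_filter, Finset.mem_univ, true_and]
          exact Or.inr (Finset.mem_insert_self _ _)
      have hxzero : ∀ Q ∈ Finset.univ.filter
          (fun Q : Finset (HardAction k) => HardAction.g ∈ Q ∨ HardAction.x ∈ Q),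
          Q ∉ insert {HardAction.x} ((cyclicShifts T).image ins) → p Q = 0 := by
        intro Q hQf hQn
        rw [Finset.mem_insert] at hQn
        push_neg at hQn
        apply hp0'
        · rw [Finset.mem_filter] at hQf
          rcases hQf.2 with h | h
          · exact Finset.ne_empty_of_mem h
          · exact Finset.ne_empty_of_mem h
        · exact hQn.1
        · intro S hS hQS
          exact hQn.2 (hQS ▸ Finset.mem_image_of_mem _ hS)
      have hsum : (∑ Q ∈ Finset.univ.filter
          (fun Q : Finset (HardAction k) => HardAction.g ∈ Q ∨ HardAction.x ∈ Q), p Q)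
          = 2/3 := by
        rw [← Finset.sum_subset hxsub hxzero, Finset.sum_insert hxnot,
          Finset.sum_image (fun a _ b _ h => ins_inj h),
          Finset.sum_congr rfl hpc', Finset.sum_const, hcs, hpx]
        field_simp
        linear_combination (3 * (k : ℝ)) * (mul_inv_cancel₀ hTc0)
      rw [if_neg (by simp), hsum]
      norm_num [hf, hc]
    | act i =>
      have hisub : ((cyclicShifts T).filter (fun S => i ∈ S)).image ins ⊆
          Finset.univ.filter
            (fun Q : Finset (HardAction k) => HardAction.g ∈ Q ∨ HardAction.act i ∈ Q) := by
        intro Q hQ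
        obtain ⟨S, hS, rfl⟩ := Finset.mem_image.mp hQ
        rw [Finset.mem_filter] at hS
        simp only [Finset.mem_filter, Finset.mem_univ, true_and]
        exact Or.inr (Finset.mem_insert_of_mem (Finset.mem_image_of_mem _ hS.2))
      have hizero : ∀ Q ∈ Finset.univ.filter
          (fun Q : Finset (HardAction k) => HardAction.g ∈ Q ∨ HardAction.act i ∈ Q),
          Q ∉ ((cyclicShifts T).filter (fun S => i ∈ S)).image ins → p Q = 0 := by
        intro Q hQf hQn
        rw [Finset.mem_filter] at hQf
        apply hp0'
        · rcases hQf.2 with h | h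
          · exact Finset.ne_empty_of_mem h
          · exact Finset.ne_empty_of_mem h
        · intro hQx
          rw [hQx] at hQf
          rcases hQf.2 with h | h <;> simp at h
        · intro S hS hQS
          apply hQn
          rw [hQS] at hQf ⊢
          have hiS : i ∈ S := by
            rcases hQf.2 with h | h
            · exact absurd h (g_notmem_ins S)
            · rcases Finset.mem_insert.mp h with h' | h'
              · exact absurd h' (by simp)
              · obtain ⟨a, ha, hae⟩ := Finset.mem_image.mp h'
                rwa [← act_inj hae]
          exact Finset.mem_image_of_mem _ (Finset.mem_filter.mpr ⟨hS, hiS⟩)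
      have hsum : (∑ Q ∈ Finset.univ.filter
          (fun Q : Finset (HardAction k) => HardAction.g ∈ Q ∨ HardAction.act i ∈ Q), p Q)
          = 1/2 := by
        rw [← Finset.sum_subset hisub hizero,
          Finset.sum_image (fun a _ b _ h => ins_inj h),
          Finset.sum_congr rfl (fun S hS => hpc' S (Finset.mem_filter.mp hS).1),
          Finset.sum_const, count_shifts hk hT0 hTlt i, nsmul_eq_mul]
        field_simp
      rw [if_neg (by simp), hsum]
      norm_num [hf, hc]
  · have h0 : ∀ Q ∈ (Finset.univ : Finset (Finset (HardAction k))),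
        Q ∉ insert ∅ (insert {HardAction.x} ((cyclicShifts T).image ins)) →
        p Q * vT T Q = 0 := by
      intro Q _ hQn
      rw [Finset.mem_insert, Finset.mem_insert] at hQn
      push_neg at hQn
      rw [hp0' Q hQn.1.ne_empty hQn.2.1 (fun S hS hQS => hQn.2.2 (hQS ▸ Finset.mem_image_of_mem _ hS)),
        zero_mul]
    have hemem : (∅ : Finset (HardAction k)) ∉
        insert {HardAction.x} ((cyclicShifts T).image ins) := by
      rw [Finset.mem_insert]
      push_neg
      constructor
      · exact (Finset.singleton_ne_empty _).symm
      · intro h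
        obtain ⟨S, _, hSe⟩ := Finset.mem_image.mp h
        exact ne_ins_of_empty S hSe.symm
    rw [← Finset.sum_subset (Finset.subset_univ _) h0, Finset.sum_insert hemem,
      Finset.sum_insert hxnot, Finset.sum_image (fun a _ b _ h => ins_inj h),
      Finset.sum_congr rfl (fun S hS => by rw [hpc' S hS, vT_ins hS (hSne S hS)]),
      Finset.sum_const, hcs, nsmul_eq_mul, vT_empty, vT_x, hpe, hpx]
    show (1 - 1/10 : ℝ) * 1 - _ = _
    field_simp
    ring
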